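/- The 3-dimensional complex Lie algebra with brackets [w₁,w₃] = λw₁ + w₂, [w₂,w₃] = μw₂ (denoted d₂(λ:μ)) is isomorphic to d₂(μ:λ) for all (λ,μ) ≠ (0,0). -/
import Mathlib


/- STATEMENT 9: The 3-dimensional complex Lie algebra `d₂(λ:μ)` with brackets
`[w₁,w₃] = λw₁ + w₂`, `[w₂,w₃] = μw₂` (all other brackets zero) is isomorphic to
`d₂(μ:λ)` for all `(λ,μ) ≠ (0,0)`. -/

/-- The bracket of `d₂(λ:μ)` on `ℂ³` (basis `w₁ = e₀, w₂ = e₁, w₃ = e₂`):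
`[w₁,w₃] = λw₁ + w₂`, `[w₂,w₃] = μw₂`. -/
def d2 (l m : ℂ) (x y : Fin 3 → ℂ) : Fin 3 → ℂ :=
  ![l * (x 0 * y 2 - x 2 * y 0),
    (x 0 * y 2 - x 2 * y 0) + m * (x 1 * y 2 - x 2 * y 1),
    0]

/-- The shear `x ↦ (x₀ + c·x₁, x₁, x₂)` as a linear equivalence. -/
noncomputable def shear (c : ℂ) : (Fin 3 → ℂ) ≃ₗ[ℂ] (Fin 3 → ℂ) where
  toFun x := ![x 0 + c * x 1, x 1, x 2]
  invFun x := ![x 0 - c * x 1, x 1, x 2]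
  map_add' x y := by funext i; fin_cases i <;> simp <;> ring
  map_smul' a x := by funext i; fin_cases i <;> simp <;> ring
  left_inv x := by funext i; fin_cases i <;> simp <;> ring
  right_inv x := by funext i; fin_cases i <;> simp <;> ring

theorem d2_swap_isomorphic (l m : ℂ) (h : ¬(l = 0 ∧ m = 0)) :
    ∃ g : (Fin 3 → ℂ) ≃ₗ[ℂ] (Fin 3 → ℂ),
      ∀ x y, g (d2 l m x y) = d2 m l (g x) (g y) := by
  refine ⟨shear (m - l), fun x y => ?_⟩
  funext i
  fin_cases i <;>
    simp [shear, d2, LinearEquiv.coe_mk] <;> ring
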